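/- arXiv:2506.16047 — 2 statements merged into one kernel-verified Lean document; each statement's English description precedes it below -/
import Mathlib

section
/- Let P, Q ∈ 𝒬_p(𝒳,𝒴) be Lipschitz continuous kernels with Lipschitz constants L_P and L_Q, and let (λ_k)_{k≥1} ⊂ 𝒫_p(𝒳) converge weakly in 𝒫_p(𝒳) to λ ∈ 𝒫_p(𝒳) (i.e., λ_k ⇀ λ and the p-th moments converge). Then the p-th powers of the integrated transportation distances converge: ∫ [W_p(P(·|x),Q(·|x))]^p λ_k(dx) → ∫ [W_p(P(·|x),Q(·|x))]^p λ(dx), and hence 𝒲_p^{λ_k}(P,Q) → 𝒲_p^λ(P,Q) as k → ∞. -/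
open MeasureTheory Filter
set_option linter.unusedSectionVars false
set_option linter.unusedVariables false

/-- Optimal transport cost between `μ` and `ν` for cost function `c`:
the infimum of `∫ c` over all couplings of `μ` and `ν`. -/
noncomputable def Wcost {α β : Type*} [MeasurableSpace α] [MeasurableSpace β]
    (c : α → β → ℝ) (μ : Measure α) (ν : Measure β) : ℝ :=
  sInf {r : ℝ | ∃ π : Measure (α × β),
    π.map Prod.fst = μ ∧ π.map Prod.snd = ν ∧ r = ∫ z, c z.1 z.2 ∂π}

/-- The Wasserstein (optimal transport) distance of order `p`. -/
noncomputable def Wp {α : Type*} [MeasurableSpace α] [PseudoMetricSpace α]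
    (p : ℝ) (μ ν : Measure α) : ℝ :=
  Wcost (fun x y => dist x y ^ p) μ ν ^ (1 / p)

/-- `μ ∈ 𝒫_p(α)`: probability measure with finite `p`-th moment. -/
def MemPp {α : Type*} [MeasurableSpace α] [PseudoMetricSpace α] (p : ℝ) (μ : Measure α) : Prop :=
  IsProbabilityMeasure μ ∧ ∀ x₀ : α, Integrable (fun x => dist x₀ x ^ p) μ

/-- `Q ∈ 𝒬_p(X, Y)`: a kernel, i.e. a measurable family of probability measures in `𝒫_p(Y)`
satisfying the growth condition `∫ d(y, y₀)^p dQ(·|x) ≤ C (1 + d(x, x₀)^p)`. -/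
def MemQp {X Y : Type*} [MeasurableSpace X] [PseudoMetricSpace X]
    [MeasurableSpace Y] [PseudoMetricSpace Y] (p : ℝ) (Q : X → Measure Y) : Prop :=
  (∀ x, IsProbabilityMeasure (Q x)) ∧
  (∀ B : Set Y, MeasurableSet B → Measurable fun x => Q x B) ∧
  (∀ x, ∀ y₀ : Y, Integrable (fun y => dist y₀ y ^ p) (Q x)) ∧
  ∃ x₀ : X, ∃ y₀ : Y, ∃ C > (0 : ℝ), ∀ x,
    (∫ y, dist y y₀ ^ p ∂(Q x)) ≤ C * (1 + dist x x₀ ^ p)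

/-- The integrated transportation distance of degree `p` with marginal `lam`. -/
noncomputable def ITD {X Y : Type*} [MeasurableSpace X] [PseudoMetricSpace X]
    [MeasurableSpace Y] [PseudoMetricSpace Y]
    (p : ℝ) (lam : Measure X) (P Q : X → Measure Y) : ℝ :=
  (∫ x, Wp p (P x) (Q x) ^ p ∂lam) ^ (1 / p)

/-- A kernel `Q` is Lipschitz continuous with constant `L` if
`W_p(Q(·|x), Q(·|x')) ≤ L · d(x, x')` for all `x, x'`. -/
def KernelLip {X Y : Type*} [MeasurableSpace X] [PseudoMetricSpace X]
    [MeasurableSpace Y] [PseudoMetricSpace Y] (p L : ℝ) (Q : X → Measure Y) : Prop :=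
  ∀ x x' : X, Wp p (Q x) (Q x') ≤ L * dist x x'

/-- Weak convergence in `𝒫_p(X)`: `∫ φ dμ_k → ∫ φ dμ` for every continuous test function
`φ` with `|φ(x)| ≤ 1 + d(x₀, x)^p`. -/
def TendstoPp {X : Type*} [MeasurableSpace X] [PseudoMetricSpace X]
    (p : ℝ) (μs : ℕ → Measure X) (μ : Measure X) : Prop :=
  ∀ x₀ : X, ∀ φ : X → ℝ, Continuous φ → (∀ x, |φ x| ≤ 1 + dist x₀ x ^ p) →
    Filter.Tendsto (fun k => ∫ x, φ x ∂(μs k)) Filter.atTop (nhds (∫ x, φ x ∂μ))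

section Aux
open ProbabilityTheory

variable {Y : Type*} [MetricSpace Y] [PolishSpace Y] [MeasurableSpace Y] [BorelSpace Y]

lemma two_rpow_bound {p a b : ℝ} (hp : 0 ≤ p) (ha : 0 ≤ a) (hb : 0 ≤ b) :
    (a + b) ^ p ≤ 2 ^ p * (a ^ p + b ^ p) := by
  have hmax : (0:ℝ) ≤ max a b := le_trans ha (le_max_left _ _)
  calc (a+b)^p ≤ (2 * max a b)^p := by
        apply Real.rpow_le_rpow (by linarith) ?_ hp
        rcases le_total a b with h|h
        · rw [max_eq_right h]; linarith
        · rw [max_eq_left h]; linarith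
    _ = 2^p * (max a b)^p := Real.mul_rpow (by norm_num) hmax
    _ ≤ 2^p * (a^p + b^p) := by
        apply mul_le_mul_of_nonneg_left ?_ (Real.rpow_nonneg (by norm_num) p)
        rcases le_total a b with h|h
        · rw [max_eq_right h]; nlinarith [Real.rpow_nonneg ha p]
        · rw [max_eq_left h]; nlinarith [Real.rpow_nonneg hb p]

/-- the coupling set -/
def CSet (p : ℝ) (μ ν : Measure Y) : Set ℝ :=
  {r : ℝ | ∃ π : Measure (Y × Y),
    π.map Prod.fst = μ ∧ π.map Prod.snd = ν ∧ r = ∫ z, dist z.1 z.2 ^ p ∂π}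

lemma wcost_eq_sInf_cset (p : ℝ) (μ ν : Measure Y) :
    Wcost (fun a b => dist a b ^ p) μ ν = sInf (CSet p μ ν) := rfl

lemma cset_bddBelow {p : ℝ} (hp : 0 ≤ p) (μ ν : Measure Y) : BddBelow (CSet p μ ν) := by
  refine ⟨0, fun r hr => ?_⟩
  obtain ⟨π, -, -, rfl⟩ := hr
  exact integral_nonneg fun z => Real.rpow_nonneg dist_nonneg p

lemma wcost_nonneg {p : ℝ} (hp : 0 ≤ p) (μ ν : Measure Y) :
    0 ≤ Wcost (fun a b => dist a b ^ p) μ ν := by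
  rw [wcost_eq_sInf_cset]
  refine Real.sInf_nonneg fun r hr => ?_
  obtain ⟨π, -, -, rfl⟩ := hr
  exact integral_nonneg fun z => Real.rpow_nonneg dist_nonneg p

lemma wcost_le_integral {p : ℝ} (hp : 0 ≤ p) {μ ν : Measure Y} {π : Measure (Y × Y)}
    (h1 : π.map Prod.fst = μ) (h2 : π.map Prod.snd = ν) :
    Wcost (fun a b => dist a b ^ p) μ ν ≤ ∫ z, dist z.1 z.2 ^ p ∂π := by
  rw [wcost_eq_sInf_cset]
  exact csInf_le (cset_bddBelow hp μ ν) ⟨π, h1, h2, rfl⟩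

lemma cont_rpow_dist {p : ℝ} (hp : 0 ≤ p) (y₀ : Y) :
    Continuous fun y : Y => dist y₀ y ^ p :=
  (continuous_const.dist continuous_id).rpow_const fun _ => Or.inr hp

lemma cont_cost {p : ℝ} (hp : 0 ≤ p) :
    Continuous fun z : Y × Y => dist z.1 z.2 ^ p :=
  (continuous_fst.dist continuous_snd).rpow_const fun _ => Or.inr hp

lemma integrable_comp_map {α β : Type*} [MeasurableSpace α] [MeasurableSpace β]
    {π : Measure α} {g : α → β} (hg : Measurable g) {f : β → ℝ}
    (hf : AEStronglyMeasurable f (π.map g)) (hi : Integrable f (π.map g)) :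
    Integrable (fun a => f (g a)) π :=
  (integrable_map_measure hf hg.aemeasurable).mp hi

lemma integral_comp_map {α β : Type*} [MeasurableSpace α] [MeasurableSpace β]
    {π : Measure α} {g : α → β} (hg : Measurable g) {f : β → ℝ}
    (hf : AEStronglyMeasurable f (π.map g)) :
    ∫ a, f (g a) ∂π = ∫ b, f b ∂(π.map g) :=
  (integral_map hg.aemeasurable hf).symm

lemma cost_integrable {p : ℝ} (hp : 0 ≤ p) {μ ν : Measure Y} {π : Measure (Y × Y)}
    (h1 : π.map Prod.fst = μ) (h2 : π.map Prod.snd = ν) (y₀ : Y)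
    (hμ : Integrable (fun y => dist y₀ y ^ p) μ) (hν : Integrable (fun y => dist y₀ y ^ p) ν) :
    Integrable (fun z : Y × Y => dist z.1 z.2 ^ p) π := by
  have hf : Continuous fun y : Y => dist y₀ y ^ p := cont_rpow_dist hp y₀
  have h1' : Integrable (fun z : Y × Y => dist y₀ z.1 ^ p) π := by
    refine integrable_comp_map (f := fun y => dist y₀ y ^ p) measurable_fst ?_ ?_
    · rw [h1]; exact hf.aestronglyMeasurable
    · rw [h1]; exact hμ
  have h2' : Integrable (fun z : Y × Y => dist y₀ z.2 ^ p) π := by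
    refine integrable_comp_map (f := fun y => dist y₀ y ^ p) measurable_snd ?_ ?_
    · rw [h2]; exact hf.aestronglyMeasurable
    · rw [h2]; exact hν
  refine ((h1'.add h2').const_mul (2 ^ p)).mono' (cont_cost hp).aestronglyMeasurable ?_
  filter_upwards with z
  rw [Real.norm_eq_abs, abs_of_nonneg (Real.rpow_nonneg dist_nonneg _)]
  calc dist z.1 z.2 ^ p ≤ (dist y₀ z.1 + dist y₀ z.2) ^ p := by
        refine Real.rpow_le_rpow dist_nonneg ?_ hp
        rw [dist_comm y₀ z.1]; exact dist_triangle _ _ _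
    _ ≤ 2 ^ p * (dist y₀ z.1 ^ p + dist y₀ z.2 ^ p) := two_rpow_bound hp dist_nonneg dist_nonneg

lemma cset_symm_subset {p : ℝ} (hp : 0 ≤ p) (μ ν : Measure Y) : CSet p μ ν ⊆ CSet p ν μ := by
  rintro r ⟨π, h1, h2, rfl⟩
  refine ⟨π.map Prod.swap, ?_, ?_, ?_⟩
  · rw [Measure.map_map measurable_fst measurable_swap]
    exact h2
  · rw [Measure.map_map measurable_snd measurable_swap]
    exact h1
  · rw [integral_map measurable_swap.aemeasurable (cont_cost hp).aestronglyMeasurable]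
    simp [dist_comm]

lemma wp_symm {p : ℝ} (hp : 0 ≤ p) (μ ν : Measure Y) : Wp p μ ν = Wp p ν μ := by
  unfold Wp
  rw [wcost_eq_sInf_cset, wcost_eq_sInf_cset,
    Set.Subset.antisymm (cset_symm_subset hp μ ν) (cset_symm_subset hp ν μ)]

lemma isProb_coupling {μ : Measure Y} [hμ : IsProbabilityMeasure μ] {π : Measure (Y × Y)}
    (h1 : π.map Prod.fst = μ) : IsProbabilityMeasure π := by
  constructor
  have := congrArg (fun m : Measure Y => m Set.univ) h1
  simp only [Measure.map_apply measurable_fst MeasurableSet.univ, Set.preimage_univ] at this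
  rw [this, measure_univ]

lemma cset_nonempty {p : ℝ} (μ ν : Measure Y) [IsProbabilityMeasure μ] [IsProbabilityMeasure ν] :
    (CSet p μ ν).Nonempty := by
  refine ⟨_, μ.prod ν, ?_, ?_, rfl⟩
  · exact Measure.fst_prod
  · exact Measure.snd_prod

lemma wp_triangle {p : ℝ} (hp : 1 ≤ p) (μ ν ρ : Measure Y)
    [IsProbabilityMeasure μ] [IsProbabilityMeasure ν] [IsProbabilityMeasure ρ]
    (y₀ : Y) (hμ : Integrable (fun y => dist y₀ y ^ p) μ)
    (hν : Integrable (fun y => dist y₀ y ^ p) ν)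
    (hρ : Integrable (fun y => dist y₀ y ^ p) ρ) :
    Wp p μ ρ ≤ Wp p μ ν + Wp p ν ρ := by
  have hp0 : 0 < p := lt_of_lt_of_le zero_lt_one hp
  have hp0' : 0 ≤ p := hp0.le
  have hpne : p ≠ 0 := hp0.ne'
  have hip : (0:ℝ) ≤ 1 / p := by positivity
  haveI : Nonempty Y := by
    rcases isEmpty_or_nonempty Y with h | h
    · exfalso
      have h1 : μ Set.univ = 1 := measure_univ
      rw [Set.univ_eq_empty_iff.mpr h, measure_empty] at h1
      exact zero_ne_one h1
    · exact h
  set W1 := Wcost (fun a b => dist a b ^ p) μ ν with hW1def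
  set W2 := Wcost (fun a b => dist a b ^ p) ν ρ with hW2def
  have hW10 : 0 ≤ W1 := wcost_nonneg hp0' μ ν
  have hW20 : 0 ≤ W2 := wcost_nonneg hp0' ν ρ
  have key : ∀ ε : ℝ, 0 < ε → Wp p μ ρ ≤ (W1 + ε) ^ (1/p) + (W2 + ε) ^ (1/p) := by
    intro ε hε
    obtain ⟨r1, hr1mem, hr1⟩ := Real.lt_sInf_add_pos (cset_nonempty (p := p) μ ν) hε
    obtain ⟨π₁, h11, h12, rfl⟩ := hr1mem
    obtain ⟨r2, hr2mem, hr2⟩ := Real.lt_sInf_add_pos (cset_nonempty (p := p) ν ρ) hε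
    obtain ⟨π₂, h21, h22, rfl⟩ := hr2mem
    rw [← wcost_eq_sInf_cset, ← hW1def] at hr1
    rw [← wcost_eq_sInf_cset, ← hW2def] at hr2
    haveI : IsProbabilityMeasure π₁ := isProb_coupling h11
    haveI : IsProbabilityMeasure π₂ := isProb_coupling h21
    set κ := π₂.condKernel with hκ
    set θ : Measure ((Y × Y) × Y) := π₁ ⊗ₘ (Kernel.prodMkLeft Y κ) with hθ
    have hm2 : Measurable fun w : (Y × Y) × Y => (w.1.2, w.2) :=
      (measurable_fst.snd).prodMk measurable_snd
    have hθ1 : θ.map Prod.fst = π₁ := Measure.fst_compProd π₁ _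
    have hθ2 : θ.map (fun w : (Y × Y) × Y => (w.1.2, w.2)) = π₂ := by
      ext s hs
      rw [Measure.map_apply hm2 hs, Measure.compProd_apply (hm2 hs)]
      have hrw : ∀ a : Y × Y,
          (Kernel.prodMkLeft Y κ) a (Prod.mk a ⁻¹' ((fun w : (Y × Y) × Y => (w.1.2, w.2)) ⁻¹' s))
            = κ a.2 (Prod.mk a.2 ⁻¹' s) := fun a => rfl
      simp_rw [hrw]
      have hfst : π₂.fst = ν := h21
      calc ∫⁻ a : Y × Y, κ a.2 (Prod.mk a.2 ⁻¹' s) ∂π₁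
          = ∫⁻ y, κ y (Prod.mk y ⁻¹' s) ∂(π₁.map Prod.snd) :=
            (lintegral_map (Kernel.measurable_kernel_prodMk_left hs) measurable_snd).symm
        _ = (π₂.fst ⊗ₘ κ) s := by
            rw [h12, ← hfst]; exact (Measure.compProd_apply hs).symm
        _ = π₂ s := by rw [hκ, π₂.disintegrate π₂.condKernel]
    have hθ2' : θ.map Prod.snd = ρ := by
      have hcomp : (Prod.snd : (Y × Y) × Y → Y)
          = Prod.snd ∘ (fun w : (Y × Y) × Y => (w.1.2, w.2)) := rfl
      rw [hcomp, ← Measure.map_map measurable_snd hm2, hθ2, h22]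
    have hθ11 : θ.map (fun w : (Y × Y) × Y => w.1.1) = μ := by
      have hcomp : (fun w : (Y × Y) × Y => w.1.1)
          = Prod.fst ∘ (Prod.fst : (Y × Y) × Y → Y × Y) := rfl
      rw [hcomp, ← Measure.map_map measurable_fst measurable_fst, hθ1, h11]
    set σ : Measure (Y × Y) := θ.map (fun w : (Y × Y) × Y => (w.1.1, w.2)) with hσ
    have hmσ : Measurable fun w : (Y × Y) × Y => (w.1.1, w.2) :=
      (measurable_fst.fst).prodMk measurable_snd
    have hσ1 : σ.map Prod.fst = μ := by
      rw [hσ, Measure.map_map measurable_fst hmσ]; exact hθ11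
    have hσ2 : σ.map Prod.snd = ρ := by
      rw [hσ, Measure.map_map measurable_snd hmσ]; exact hθ2'
    set F : (Y × Y) × Y → ℝ := fun w => dist w.1.1 w.1.2 with hF
    set G : (Y × Y) × Y → ℝ := fun w => dist w.1.2 w.2 with hG
    have hFc : Continuous F := continuous_fst.fst.dist continuous_fst.snd
    have hGc : Continuous G := continuous_fst.snd.dist continuous_snd
    have hIπ1 : Integrable (fun z : Y × Y => dist z.1 z.2 ^ p) π₁ :=
      cost_integrable hp0' h11 h12 y₀ hμ hν
    have hIπ2 : Integrable (fun z : Y × Y => dist z.1 z.2 ^ p) π₂ :=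
      cost_integrable hp0' h21 h22 y₀ hν hρ
    have hIF : Integrable (fun w => F w ^ p) θ := by
      refine integrable_comp_map (f := fun z : Y × Y => dist z.1 z.2 ^ p)
        (g := Prod.fst) measurable_fst ?_ ?_ <;> rw [hθ1]
      exacts [(cont_cost hp0').aestronglyMeasurable, hIπ1]
    have hIG : Integrable (fun w => G w ^ p) θ := by
      refine integrable_comp_map (f := fun z : Y × Y => dist z.1 z.2 ^ p)
        (g := fun w : (Y × Y) × Y => (w.1.2, w.2)) hm2 ?_ ?_ <;> rw [hθ2]
      exacts [(cont_cost hp0').aestronglyMeasurable, hIπ2]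
    have hEF : ∫ w, F w ^ p ∂θ = ∫ z, dist z.1 z.2 ^ p ∂π₁ := by
      rw [integral_comp_map (f := fun z : Y × Y => dist z.1 z.2 ^ p) (g := Prod.fst)
        measurable_fst (by rw [hθ1]; exact (cont_cost hp0').aestronglyMeasurable), hθ1]
    have hEG : ∫ w, G w ^ p ∂θ = ∫ z, dist z.1 z.2 ^ p ∂π₂ := by
      rw [integral_comp_map (f := fun z : Y × Y => dist z.1 z.2 ^ p)
        (g := fun w : (Y × Y) × Y => (w.1.2, w.2)) hm2
        (by rw [hθ2]; exact (cont_cost hp0').aestronglyMeasurable), hθ2]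
    set A := ∫ z, dist z.1 z.2 ^ p ∂π₁ with hA
    set B := ∫ z, dist z.1 z.2 ^ p ∂π₂ with hB
    have hA0 : 0 ≤ A := integral_nonneg fun z => Real.rpow_nonneg dist_nonneg p
    have hB0 : 0 ≤ B := integral_nonneg fun z => Real.rpow_nonneg dist_nonneg p
    have hFG : Integrable (fun w => (F w + G w) ^ p) θ := by
      refine ((hIF.add hIG).const_mul (2 ^ p)).mono'
        ((hFc.add hGc).rpow_const fun _ => Or.inr hp0').aestronglyMeasurable ?_
      filter_upwards with w
      rw [Real.norm_eq_abs, abs_of_nonneg (Real.rpow_nonneg (by positivity) _)]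
      exact two_rpow_bound hp0' dist_nonneg dist_nonneg
    have hmink : ∫ w, (F w + G w) ^ p ∂θ ≤ (A ^ (1/p) + B ^ (1/p)) ^ p := by
      have hged : (0:ℝ) ≤ (A ^ (1/p) + B ^ (1/p)) ^ p :=
        Real.rpow_nonneg (by positivity) _
      rw [← ENNReal.ofReal_le_ofReal_iff hged]
      set f : (Y × Y) × Y → ENNReal := fun w => ENNReal.ofReal (F w) with hf
      set g : (Y × Y) × Y → ENNReal := fun w => ENNReal.ofReal (G w) with hg
      have h1 : ENNReal.ofReal (∫ w, (F w + G w) ^ p ∂θ) = ∫⁻ w, (f w + g w) ^ p ∂θ := by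
        rw [ofReal_integral_eq_lintegral_ofReal hFG
          (Eventually.of_forall fun w => Real.rpow_nonneg (by positivity) _)]
        refine lintegral_congr fun w => ?_
        rw [hf, hg, ← ENNReal.ofReal_add dist_nonneg dist_nonneg,
          ENNReal.ofReal_rpow_of_nonneg (by positivity) hp0']
      have h2 : ∫⁻ w, f w ^ p ∂θ = ENNReal.ofReal A := by
        rw [← hEF, ofReal_integral_eq_lintegral_ofReal hIF
          (Eventually.of_forall fun w => Real.rpow_nonneg dist_nonneg _)]
        refine (lintegral_congr fun w => ?_).symm
        rw [hf, ENNReal.ofReal_rpow_of_nonneg dist_nonneg hp0']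
      have h3 : ∫⁻ w, g w ^ p ∂θ = ENNReal.ofReal B := by
        rw [← hEG, ofReal_integral_eq_lintegral_ofReal hIG
          (Eventually.of_forall fun w => Real.rpow_nonneg dist_nonneg _)]
        refine (lintegral_congr fun w => ?_).symm
        rw [hg, ENNReal.ofReal_rpow_of_nonneg dist_nonneg hp0']
      have hm := ENNReal.lintegral_Lp_add_le (μ := θ) (f := f) (g := g)
        (hFc.measurable.ennreal_ofReal.aemeasurable)
        (hGc.measurable.ennreal_ofReal.aemeasurable) hp
      simp only [Pi.add_apply] at hm
      calc ENNReal.ofReal (∫ w, (F w + G w) ^ p ∂θ)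
          = ∫⁻ w, (f w + g w) ^ p ∂θ := h1
        _ = ((∫⁻ w, (f w + g w) ^ p ∂θ) ^ (1/p)) ^ p := by
            rw [← ENNReal.rpow_mul, one_div, inv_mul_cancel₀ hpne, ENNReal.rpow_one]
        _ ≤ ((∫⁻ w, f w ^ p ∂θ) ^ (1/p) + (∫⁻ w, g w ^ p ∂θ) ^ (1/p)) ^ p :=
            ENNReal.rpow_le_rpow hm hp0'
        _ = (ENNReal.ofReal A ^ (1/p) + ENNReal.ofReal B ^ (1/p)) ^ p := by rw [h2, h3]
        _ = ENNReal.ofReal ((A ^ (1/p) + B ^ (1/p)) ^ p) := by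
            rw [ENNReal.ofReal_rpow_of_nonneg hA0 hip, ENNReal.ofReal_rpow_of_nonneg hB0 hip,
              ← ENNReal.ofReal_add (Real.rpow_nonneg hA0 _) (Real.rpow_nonneg hB0 _),
              ENNReal.ofReal_rpow_of_nonneg (by positivity) hp0']
    have hcostσ : ∫ z, dist z.1 z.2 ^ p ∂σ = ∫ w, dist w.1.1 w.2 ^ p ∂θ := by
      rw [hσ]
      exact integral_map hmσ.aemeasurable (by
        rw [← hσ]; exact (cont_cost hp0').aestronglyMeasurable)
    have hHle : ∫ w, dist w.1.1 w.2 ^ p ∂θ ≤ ∫ w, (F w + G w) ^ p ∂θ := by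
      refine integral_mono_of_nonneg
        (Eventually.of_forall fun w => Real.rpow_nonneg dist_nonneg _) hFG
        (Eventually.of_forall fun w => ?_)
      exact Real.rpow_le_rpow dist_nonneg (dist_triangle _ _ _) hp0'
    have hWle : Wcost (fun a b => dist a b ^ p) μ ρ
        ≤ ((W1 + ε) ^ (1/p) + (W2 + ε) ^ (1/p)) ^ p := by
      refine le_trans (wcost_le_integral hp0' hσ1 hσ2) ?_
      rw [hcostσ]
      refine le_trans hHle (le_trans hmink ?_)
      have hA' : A ^ (1/p) ≤ (W1 + ε) ^ (1/p) := Real.rpow_le_rpow hA0 hr1.le hip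
      have hB' : B ^ (1/p) ≤ (W2 + ε) ^ (1/p) := Real.rpow_le_rpow hB0 hr2.le hip
      exact Real.rpow_le_rpow (by positivity) (by linarith) hp0'
    show Wcost (fun a b => dist a b ^ p) μ ρ ^ (1/p) ≤ _
    calc Wcost (fun a b => dist a b ^ p) μ ρ ^ (1/p)
        ≤ (((W1 + ε) ^ (1/p) + (W2 + ε) ^ (1/p)) ^ p) ^ (1/p) :=
          Real.rpow_le_rpow (wcost_nonneg hp0' μ ρ) hWle hip
      _ = (W1 + ε) ^ (1/p) + (W2 + ε) ^ (1/p) := by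
          rw [one_div, Real.rpow_rpow_inv
            (add_nonneg (Real.rpow_nonneg (by linarith) _) (Real.rpow_nonneg (by linarith) _))
            hpne]
  have hlim : Tendsto (fun ε : ℝ => (W1 + ε) ^ (1/p) + (W2 + ε) ^ (1/p))
      (nhdsWithin 0 (Set.Ioi 0)) (nhds (W1 ^ (1/p) + W2 ^ (1/p))) := by
    have h1 : Tendsto (fun ε : ℝ => W1 + ε) (nhds 0) (nhds W1) := by
      simpa using tendsto_const_nhds.add (tendsto_id (x := nhds (0:ℝ)))
    have h2 : Tendsto (fun ε : ℝ => W2 + ε) (nhds 0) (nhds W2) := by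
      simpa using tendsto_const_nhds.add (tendsto_id (x := nhds (0:ℝ)))
    exact ((h1.rpow_const (Or.inr hip)).add (h2.rpow_const (Or.inr hip))).mono_left
      nhdsWithin_le_nhds
  exact ge_of_tendsto hlim (eventually_nhdsWithin_of_forall fun ε hε => key ε hε)

end Aux


section Growth
open ProbabilityTheory
variable {Y : Type*} [MetricSpace Y] [PolishSpace Y] [MeasurableSpace Y] [BorelSpace Y]

lemma wcost_le_moments {p : ℝ} (hp : 0 ≤ p) (μ ν : Measure Y)
    [IsProbabilityMeasure μ] [IsProbabilityMeasure ν] (y₀ : Y)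
    (hμ : Integrable (fun y => dist y₀ y ^ p) μ) (hν : Integrable (fun y => dist y₀ y ^ p) ν) :
    Wcost (fun a b => dist a b ^ p) μ ν
      ≤ 2 ^ p * ((∫ y, dist y₀ y ^ p ∂μ) + ∫ y, dist y₀ y ^ p ∂ν) := by
  have h1 : (μ.prod ν).map Prod.fst = μ := Measure.fst_prod
  have h2 : (μ.prod ν).map Prod.snd = ν := Measure.snd_prod
  refine le_trans (wcost_le_integral hp h1 h2) ?_
  have hi1 : Integrable (fun z : Y × Y => dist y₀ z.1 ^ p) (μ.prod ν) :=
    integrable_comp_map (f := fun y => dist y₀ y ^ p) measurable_fst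
      (by rw [h1]; exact (cont_rpow_dist hp y₀).aestronglyMeasurable) (by rw [h1]; exact hμ)
  have hi2 : Integrable (fun z : Y × Y => dist y₀ z.2 ^ p) (μ.prod ν) :=
    integrable_comp_map (f := fun y => dist y₀ y ^ p) measurable_snd
      (by rw [h2]; exact (cont_rpow_dist hp y₀).aestronglyMeasurable) (by rw [h2]; exact hν)
  have hle : ∫ z, dist z.1 z.2 ^ p ∂(μ.prod ν)
      ≤ ∫ z, 2 ^ p * (dist y₀ z.1 ^ p + dist y₀ z.2 ^ p) ∂(μ.prod ν) := by
    refine integral_mono_of_nonneg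
      (Eventually.of_forall fun z => Real.rpow_nonneg dist_nonneg _)
      ((hi1.add hi2).const_mul _) (Eventually.of_forall fun z => ?_)
    calc dist z.1 z.2 ^ p ≤ (dist y₀ z.1 + dist y₀ z.2) ^ p := by
          refine Real.rpow_le_rpow dist_nonneg ?_ hp
          rw [dist_comm y₀ z.1]; exact dist_triangle _ _ _
      _ ≤ 2 ^ p * (dist y₀ z.1 ^ p + dist y₀ z.2 ^ p) :=
          two_rpow_bound hp dist_nonneg dist_nonneg
  refine le_trans hle ?_
  have e1 : ∫ z : Y × Y, dist y₀ z.1 ^ p ∂(μ.prod ν) = ∫ y, dist y₀ y ^ p ∂μ := by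
    rw [integral_comp_map (f := fun y => dist y₀ y ^ p) measurable_fst
      (by rw [h1]; exact (cont_rpow_dist hp y₀).aestronglyMeasurable), h1]
  have e2 : ∫ z : Y × Y, dist y₀ z.2 ^ p ∂(μ.prod ν) = ∫ y, dist y₀ y ^ p ∂ν := by
    rw [integral_comp_map (f := fun y => dist y₀ y ^ p) measurable_snd
      (by rw [h2]; exact (cont_rpow_dist hp y₀).aestronglyMeasurable), h2]
  rw [integral_const_mul, integral_add hi1 hi2, e1, e2]

end Growth


/-- If `P, Q ∈ 𝒬_p(𝒳, 𝒴)` are Lipschitz continuous kernels and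
`λ_k → λ` weakly in `𝒫_p(𝒳)`, then `∫ W_p(P(·|x), Q(·|x))^p λ_k(dx) →
∫ W_p(P(·|x), Q(·|x))^p λ(dx)`, and hence `𝒲_p^{λ_k}(P, Q) → 𝒲_p^λ(P, Q)`. -/
theorem itd_tendsto_of_marginal_tendsto {X Y : Type*}
    [MetricSpace X] [PolishSpace X] [MeasurableSpace X] [BorelSpace X]
    [MetricSpace Y] [PolishSpace Y] [MeasurableSpace Y] [BorelSpace Y]
    (p : ℝ) (hp : 1 ≤ p) (P Q : X → Measure Y) (hP : MemQp p P) (hQ : MemQp p Q)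
    (LP LQ : ℝ) (hPLip : KernelLip p LP P) (hQLip : KernelLip p LQ Q)
    (lams : ℕ → Measure X) (lam : Measure X)
    (hlams : ∀ k, MemPp p (lams k)) (hlam : MemPp p lam)
    (hconv : TendstoPp p lams lam) :
    Filter.Tendsto (fun k => ∫ x, Wp p (P x) (Q x) ^ p ∂(lams k)) Filter.atTop
      (nhds (∫ x, Wp p (P x) (Q x) ^ p ∂lam)) ∧
    Filter.Tendsto (fun k => ITD p (lams k) P Q) Filter.atTop (nhds (ITD p lam P Q)) := by
  obtain ⟨hPprob, -, hPint, xP, yP, CP, hCP, hPg⟩ := hP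
  obtain ⟨hQprob, -, hQint, xQ, yQ, CQ, hCQ, hQg⟩ := hQ
  have hp0 : 0 < p := lt_of_lt_of_le one_pos hp
  have hp0' : 0 ≤ p := hp0.le
  have hpne : p ≠ 0 := ne_of_gt hp0
  set g : X → ℝ := fun x => Wp p (P x) (Q x) ^ p with hgdef
  have hWnn : ∀ x, 0 ≤ Wp p (P x) (Q x) :=
    fun x => Real.rpow_nonneg (wcost_nonneg hp0' _ _) _
  have hgW : ∀ x, g x = Wcost (fun a b => dist a b ^ p) (P x) (Q x) := by
    intro x
    show (Wcost _ _ _ ^ (1 / p)) ^ p = _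
    rw [one_div, Real.rpow_inv_rpow (wcost_nonneg hp0' _ _) hpne]
  have hg0 : ∀ x, 0 ≤ g x := fun x => Real.rpow_nonneg (hWnn x) p
  set w : ℝ := 2 ^ p with hw
  have hw0 : 0 < w := Real.rpow_pos_of_pos two_pos p
  have hQbound : ∀ x, ∫ y, dist yP y ^ p ∂(Q x)
      ≤ w * (CQ * (1 + dist x xQ ^ p) + dist yQ yP ^ p) := by
    intro x
    haveI := hQprob x
    have hiQ : Integrable (fun y => dist y yQ ^ p) (Q x) := by
      simpa [dist_comm] using hQint x yQ
    have step : ∫ y, dist yP y ^ p ∂(Q x)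
        ≤ w * ((∫ y, dist y yQ ^ p ∂(Q x)) + dist yQ yP ^ p) := by
      calc ∫ y, dist yP y ^ p ∂(Q x)
          ≤ ∫ y, w * (dist y yQ ^ p + dist yQ yP ^ p) ∂(Q x) := by
            refine integral_mono_of_nonneg
              (Eventually.of_forall fun y => Real.rpow_nonneg dist_nonneg _)
              ((hiQ.add (integrable_const _)).const_mul w)
              (Eventually.of_forall fun y => ?_)
            calc dist yP y ^ p ≤ (dist y yQ + dist yQ yP) ^ p := by
                  refine Real.rpow_le_rpow dist_nonneg ?_ hp0'
                  rw [dist_comm yP y]; exact dist_triangle _ _ _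
              _ ≤ w * (dist y yQ ^ p + dist yQ yP ^ p) :=
                  two_rpow_bound hp0' dist_nonneg dist_nonneg
        _ = w * ((∫ y, dist y yQ ^ p ∂(Q x)) + dist yQ yP ^ p) := by
            rw [integral_const_mul, integral_add hiQ (integrable_const _), integral_const]
            simp [measure_univ]
    refine le_trans step (mul_le_mul_of_nonneg_left ?_ hw0.le)
    have := hQg x
    linarith
  have hgrow : ∀ x, g x ≤ w * ((CP * (1 + dist x xP ^ p))
      + w * (CQ * (1 + w * (dist x xP ^ p + dist xP xQ ^ p)) + dist yQ yP ^ p)) := by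
    intro x
    haveI := hPprob x; haveI := hQprob x
    have hiP : Integrable (fun y => dist yP y ^ p) (P x) := hPint x yP
    have hiQ' : Integrable (fun y => dist yP y ^ p) (Q x) := hQint x yP
    have h0 : g x ≤ w * ((∫ y, dist yP y ^ p ∂(P x)) + ∫ y, dist yP y ^ p ∂(Q x)) := by
      rw [hgW x]; exact wcost_le_moments hp0' _ _ yP hiP hiQ'
    have hP1 : ∫ y, dist yP y ^ p ∂(P x) ≤ CP * (1 + dist x xP ^ p) := by
      have := hPg x
      simpa [dist_comm] using this
    have hQ1 := hQbound x
    have hxQ : dist x xQ ^ p ≤ w * (dist x xP ^ p + dist xP xQ ^ p) := by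
      calc dist x xQ ^ p ≤ (dist x xP + dist xP xQ) ^ p :=
            Real.rpow_le_rpow dist_nonneg (dist_triangle _ _ _) hp0'
        _ ≤ _ := two_rpow_bound hp0' dist_nonneg dist_nonneg
    refine le_trans h0 (mul_le_mul_of_nonneg_left ?_ hw0.le)
    have hQ2 : ∫ y, dist yP y ^ p ∂(Q x)
        ≤ w * (CQ * (1 + w * (dist x xP ^ p + dist xP xQ ^ p)) + dist yQ yP ^ p) := by
      refine le_trans hQ1 (mul_le_mul_of_nonneg_left ?_ hw0.le)
      have : CQ * (1 + dist x xQ ^ p) ≤ CQ * (1 + w * (dist x xP ^ p + dist xP xQ ^ p)) :=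
        mul_le_mul_of_nonneg_left (by linarith) hCQ.le
      linarith
    linarith
  set e := dist xP xQ ^ p with he
  set dd := dist yQ yP ^ p with hdd
  have he0 : 0 ≤ e := Real.rpow_nonneg dist_nonneg _
  have hdd0 : 0 ≤ dd := Real.rpow_nonneg dist_nonneg _
  set C : ℝ := w * CP + w * w * CQ + w * w * w * CQ + w * w * w * CQ * e + w * w * dd + 1
    with hC
  have hC0 : 0 < C := by positivity
  have hbound : ∀ x, g x ≤ C * (1 + dist x xP ^ p) := by
    intro x
    refine le_trans (hgrow x) ?_
    set t := dist x xP ^ p with htdef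
    have ht : 0 ≤ t := Real.rpow_nonneg dist_nonneg _
    have hconst : w * CP + w * w * CQ + w * w * w * CQ * e + w * w * dd ≤ C := by
      have h1 : 0 ≤ w * w * w * CQ := by positivity
      rw [hC]; linarith
    have hcoef : w * CP + w * w * w * CQ ≤ C := by
      have h1 : 0 ≤ w * w * CQ := by positivity
      have h2 : 0 ≤ w * w * w * CQ * e := by positivity
      have h3 : 0 ≤ w * w * dd := by positivity
      rw [hC]; linarith
    calc w * ((CP * (1 + t)) + w * (CQ * (1 + w * (t + e)) + dd))
        = (w * CP + w * w * CQ + w * w * w * CQ * e + w * w * dd)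
          + (w * CP + w * w * w * CQ) * t := by ring
      _ ≤ C * 1 + C * t := add_le_add (by linarith) (mul_le_mul_of_nonneg_right hcoef ht)
      _ = C * (1 + t) := by ring
  have htri : ∀ x x' : X, Wp p (P x) (Q x)
      ≤ Wp p (P x') (Q x') + (max LP 0 + max LQ 0) * dist x x' := by
    intro x x'
    haveI := hPprob x; haveI := hPprob x'; haveI := hQprob x; haveI := hQprob x'
    have t1 : Wp p (P x) (Q x) ≤ Wp p (P x) (P x') + Wp p (P x') (Q x) :=
      wp_triangle hp _ _ _ yP (hPint x yP) (hPint x' yP) (hQint x yP)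
    have t2 : Wp p (P x') (Q x) ≤ Wp p (P x') (Q x') + Wp p (Q x') (Q x) :=
      wp_triangle hp _ _ _ yP (hPint x' yP) (hQint x' yP) (hQint x yP)
    have s1 : Wp p (P x) (P x') ≤ max LP 0 * dist x x' :=
      le_trans (hPLip x x') (mul_le_mul_of_nonneg_right (le_max_left _ _) dist_nonneg)
    have s2 : Wp p (Q x') (Q x) ≤ max LQ 0 * dist x x' := by
      rw [wp_symm hp0' (Q x') (Q x)]
      exact le_trans (hQLip x x') (mul_le_mul_of_nonneg_right (le_max_left _ _) dist_nonneg)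
    have hring : (max LP 0 + max LQ 0) * dist x x'
        = max LP 0 * dist x x' + max LQ 0 * dist x x' := by ring
    linarith
  have hL0 : (0:ℝ) ≤ max LP 0 + max LQ 0 := by positivity
  have hWcont : Continuous fun x => Wp p (P x) (Q x) := by
    refine (LipschitzWith.of_dist_le_mul (K := (max LP 0 + max LQ 0).toNNReal)
      (f := fun x => Wp p (P x) (Q x)) ?_).continuous
    intro x x'
    rw [Real.dist_eq, Real.coe_toNNReal _ hL0, abs_sub_le_iff]
    have h1 := htri x x'
    have h2 := htri x' x
    rw [dist_comm x' x] at h2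
    constructor <;> linarith
  have hgcont : Continuous g := hWcont.rpow_const fun x => Or.inr hp0'
  have hφb : ∀ x, |g x / C| ≤ 1 + dist xP x ^ p := by
    intro x
    rw [abs_div, abs_of_nonneg (hg0 x), abs_of_pos hC0, div_le_iff₀ hC0]
    calc g x ≤ C * (1 + dist x xP ^ p) := hbound x
      _ = (1 + dist xP x ^ p) * C := by rw [dist_comm x xP]; ring
  have hT := hconv xP (fun x => g x / C) (hgcont.div_const C) hφb
  simp_rw [integral_div] at hT
  have hT2 : Filter.Tendsto (fun k => ∫ x, g x ∂(lams k)) Filter.atTop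
      (nhds (∫ x, g x ∂lam)) := by
    have h := hT.const_mul C
    have hfun : (fun k => C * ((∫ x, g x ∂(lams k)) / C)) = fun k => ∫ x, g x ∂(lams k) := by
      funext k
      rw [mul_comm, div_mul_cancel₀ _ hC0.ne']
    rw [hfun, mul_comm, div_mul_cancel₀ _ hC0.ne'] at h
    exact h
  refine ⟨hT2, ?_⟩
  exact hT2.rpow_const (Or.inr (by positivity))
end

section
/- Consider K clients; for each client k, let x_1^k,…,x_m^k be i.i.d. samples from P^k and y_1^k,…,y_n^k i.i.d. samples from Q^k in ℝ^d, all samples mutually independent, and define the empirical measures P_m^k = (1/m)Σ_i δ_{x_i^k} and Q_n^k = (1/n)Σ_j δ_{y_j^k} and the statistic ÎTD² = (1/K) Σ_{k=1}^K W_2(P_m^k, Q_n^k)². Suppose D_x = max_k sup{‖x‖² : x in the support of P^k} and D_y = max_k sup{‖y‖² : y in the support of Q^k} are finite. Then, viewed as a function of the Km + Kn sample points, ÎTD² satisfies the bounded difference property: replacing any single x_i^k by any other point of the support changes ÎTD² by at most 2(D_x + D_y)/(Km), and replacing any single y_j^k changes ÎTD² by at most 2(D_x + D_y)/(Kn). 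-/
open MeasureTheory Filter
open scoped ENNReal

/-- The squared 2-Wasserstein distance `W_2(μ, ν)²`. -/
noncomputable def W2sq {α : Type*} [MeasurableSpace α] [PseudoMetricSpace α]
    (μ ν : Measure α) : ℝ :=
  Wcost (fun x y => dist x y ^ 2) μ ν

/-- The empirical measure `(1/N) ∑_{i} δ_{f i}` of the points `f 0, …, f (N-1)`. -/
noncomputable def empir {α : Type*} [MeasurableSpace α] (N : ℕ) (f : Fin N → α) : Measure α :=
  ((N : ENNReal))⁻¹ • ∑ i : Fin N, Measure.dirac (f i)

/-- Euclidean space `ℝ^d`. -/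
abbrev Euc (d : ℕ) := EuclideanSpace ℝ (Fin d)

/-- The empirical squared integrated transportation distance with equal weights `1/K`:
`ÎTD² = (1/K) ∑_k W_2(P_m^k, Q_n^k)²` where `P_m^k`, `Q_n^k` are the empirical measures
of the samples of client `k`. -/
noncomputable def ITD2 {d : ℕ} (K m n : ℕ)
    (x : Fin K → Fin m → Euc d) (y : Fin K → Fin n → Euc d) : ℝ :=
  (1 / (K : ℝ)) * ∑ k : Fin K, W2sq (empir m (x k)) (empir n (y k))

section aux

variable {d : ℕ}

lemma empir_apply {α : Type*} [MeasurableSpace α] (N : ℕ) (f : Fin N → α) (E : Set α) :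
    empir N f E = (N : ENNReal)⁻¹ * ∑ i : Fin N, Measure.dirac (f i) E := by
  simp [empir, Measure.smul_apply, Measure.finset_sum_apply, smul_eq_mul]

lemma empir_univ {α : Type*} [MeasurableSpace α] {N : ℕ} (hN : 0 < N) (f : Fin N → α) :
    empir N f Set.univ = 1 := by
  rw [empir_apply]
  simp only [measure_univ, Finset.sum_const, Finset.card_univ, Fintype.card_fin, nsmul_eq_mul,
    mul_one]
  exact ENNReal.inv_mul_cancel (by exact_mod_cast hN.ne') (ENNReal.natCast_ne_top N)

lemma empir_prob {α : Type*} [MeasurableSpace α] {N : ℕ} (hN : 0 < N) (f : Fin N → α) :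
    IsProbabilityMeasure (empir N f) := ⟨empir_univ hN f⟩

lemma empir_null {α : Type*} [MeasurableSpace α] (N : ℕ) (f : Fin N → α) {E : Set α}
    (hE : MeasurableSet E) (h : ∀ i, f i ∉ E) : empir N f E = 0 := by
  rw [empir_apply]
  have : ∀ i : Fin N, Measure.dirac (f i) E = 0 := fun i => by
    rw [Measure.dirac_apply' _ hE]; simp [Set.indicator_of_notMem (h i)]
  simp [this]

lemma cmeas : Measurable (fun z : Euc d × Euc d => dist z.1 z.2 ^ 2) :=
  ((continuous_fst.dist continuous_snd).pow 2).measurable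

lemma cset_nonneg (μ ν : Measure (Euc d)) :
    ∀ r ∈ {r : ℝ | ∃ π : Measure (Euc d × Euc d),
      π.map Prod.fst = μ ∧ π.map Prod.snd = ν ∧ r = ∫ z, dist z.1 z.2 ^ 2 ∂π}, 0 ≤ r := by
  rintro r ⟨π, -, -, rfl⟩; exact integral_nonneg fun z => sq_nonneg _

lemma cset_nonempty_s7 {m n : ℕ} (hm : 0 < m) (hn : 0 < n) (x : Fin m → Euc d)
    (y : Fin n → Euc d) :
    Set.Nonempty {r : ℝ | ∃ π : Measure (Euc d × Euc d),
      π.map Prod.fst = empir m x ∧ π.map Prod.snd = empir n y ∧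
      r = ∫ z, dist z.1 z.2 ^ 2 ∂π} := by
  haveI := empir_prob hm x
  haveI := empir_prob hn y
  refine ⟨_, (empir m x).prod (empir n y), ?_, ?_, rfl⟩
  · rw [Measure.map_fst_prod]; simp
  · rw [Measure.map_snd_prod]; simp

end aux

lemma key {d : ℕ} (m n : ℕ) (hm : 0 < m) (hn : 0 < n)
    (x x' : Fin m → Euc d) (y : Fin n → Euc d) (i₀ : Fin m)
    (hxx : ∀ i, i ≠ i₀ → x' i = x i)
    (C : ℝ)
    (hb : ∀ i j, dist (x i) (y j) ^ 2 ≤ C)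
    (hb' : ∀ j, dist (x' i₀) (y j) ^ 2 ≤ C) :
    W2sq (empir m x') (empir n y) ≤ W2sq (empir m x) (empir n y) + C / m := by
  have hC : 0 ≤ C := le_trans (sq_nonneg _) (hb ⟨0, hm⟩ ⟨0, hn⟩)
  have hCm : 0 ≤ C / m := div_nonneg hC (Nat.cast_nonneg m)
  by_cases hab : x' i₀ = x i₀
  · have hx'x : x' = x := funext fun i => by
      by_cases h : i = i₀
      · subst h; exact hab
      · exact hxx i h
    rw [hx'x]; linarith
  -- main case
  set a := x i₀ with ha
  set b := x' i₀ with hbdef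
  set c : Euc d × Euc d → ℝ := fun z => dist z.1 z.2 ^ 2 with hc
  set SS := {r : ℝ | ∃ π : Measure (Euc d × Euc d),
      π.map Prod.fst = empir m x ∧ π.map Prod.snd = empir n y ∧ r = ∫ z, c z ∂π} with hSS
  set SS' := {r : ℝ | ∃ π : Measure (Euc d × Euc d),
      π.map Prod.fst = empir m x' ∧ π.map Prod.snd = empir n y ∧ r = ∫ z, c z ∂π} with hSS'
  have hW : W2sq (empir m x) (empir n y) = sInf SS := rfl
  have hW' : W2sq (empir m x') (empir n y) = sInf SS' := rfl
  have hbdd' : BddBelow SS' := ⟨0, fun r hr => cset_nonneg _ _ r hr⟩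
  have hne : SS.Nonempty := cset_nonempty_s7 hm hn x y
  have hstep : ∀ r ∈ SS, ∃ r' ∈ SS', r' ≤ r + C / m := by
    rintro r ⟨π, hπ1, hπ2, rfl⟩
    have hπuniv : π Set.univ = 1 := by
      have h := congrArg (fun μ : Measure (Euc d) => μ Set.univ) hπ1
      rwa [Measure.map_apply measurable_fst MeasurableSet.univ, Set.preimage_univ,
        empir_univ hm x] at h
    haveI : IsProbabilityMeasure π := ⟨hπuniv⟩
    set s : Set (Euc d × Euc d) := Prod.fst ⁻¹' {a} with hsdef
    have hs : MeasurableSet s := measurable_fst (measurableSet_singleton a)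
    set ρ := π.restrict s with hρ
    set σ := π.restrict sᶜ with hσ
    have hσρ : σ + ρ = π := by
      rw [add_comm]; exact Measure.restrict_add_restrict_compl hs
    set t := π s with htdef
    have hρuniv : ρ Set.univ = t := by
      rw [hρ, Measure.restrict_apply_univ]
    have ht_eq : t = empir m x {a} := by
      rw [← hπ1, Measure.map_apply measurable_fst (measurableSet_singleton a)]
    have htlow : (m : ℝ≥0∞)⁻¹ ≤ t := by
      rw [ht_eq, empir_apply]
      have hd : Measure.dirac (x i₀) {a} = 1 := by
        rw [Measure.dirac_apply' _ (measurableSet_singleton a)]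
        simp [← ha]
      have hsum1 : (1 : ℝ≥0∞) ≤ ∑ i : Fin m, Measure.dirac (x i) {a} :=
        hd ▸ Finset.single_le_sum (f := fun i => Measure.dirac (x i) {a})
          (fun _ _ => zero_le) (Finset.mem_univ i₀)
      calc (m : ℝ≥0∞)⁻¹ = (m : ℝ≥0∞)⁻¹ * 1 := (mul_one _).symm
        _ ≤ (m : ℝ≥0∞)⁻¹ * ∑ i : Fin m, Measure.dirac (x i) {a} := mul_le_mul_right hsum1 _
    have hminv0 : (0 : ℝ≥0∞) < (m : ℝ≥0∞)⁻¹ :=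
      ENNReal.inv_pos.mpr (ENNReal.natCast_ne_top m)
    have ht0 : t ≠ 0 := (lt_of_lt_of_le hminv0 htlow).ne'
    have httop : t ≠ ∞ := (measure_lt_top π s).ne
    have hm0 : (m : ℝ≥0∞) ≠ 0 := by exact_mod_cast hm.ne'
    set u : ℝ≥0∞ := ((m : ℝ≥0∞) * t)⁻¹ with hu
    have hut : u * t = (m : ℝ≥0∞)⁻¹ := by
      rw [hu, ENNReal.mul_inv (Or.inl hm0) (Or.inl (ENNReal.natCast_ne_top m)),
        mul_assoc, ENNReal.inv_mul_cancel ht0 httop, mul_one]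
    have hu1 : u ≤ 1 := by
      rw [hu]
      apply ENNReal.inv_le_one.mpr
      calc (1 : ℝ≥0∞) = (m : ℝ≥0∞) * (m : ℝ≥0∞)⁻¹ :=
            (ENNReal.mul_inv_cancel hm0 (ENNReal.natCast_ne_top m)).symm
        _ ≤ (m : ℝ≥0∞) * t := mul_le_mul_right htlow _
    set T : Euc d × Euc d → Euc d × Euc d := fun z => (b, z.2) with hTdef
    have hTm : Measurable T := measurable_const.prodMk measurable_snd
    set π' := σ + (1 - u) • ρ + (u • ρ).map T with hπ'def
    -- fst marginal pieces
    have hρfst : ρ.map Prod.fst = t • Measure.dirac a := by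
      ext E hE
      rw [Measure.map_apply measurable_fst hE, hρ, Measure.restrict_apply (measurable_fst hE),
        Measure.smul_apply, Measure.dirac_apply' _ hE, smul_eq_mul]
      by_cases haE : a ∈ E
      · have hss : Prod.fst ⁻¹' E ∩ s = s := by
          apply Set.inter_eq_right.mpr
          intro z hz
          have : z.1 = a := hz
          simp only [Set.mem_preimage, this]; exact haE
        rw [hss, Set.indicator_of_mem haE]
        simp [htdef]
      · have hss : Prod.fst ⁻¹' E ∩ s = ∅ := by
          ext z
          simp only [Set.mem_inter_iff, Set.mem_preimage, Set.mem_empty_iff_false, iff_false,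
            not_and, hsdef, Set.mem_singleton_iff]
          intro hzE hza
          exact haE (hza ▸ hzE)
        rw [hss, Set.indicator_of_notMem haE]
        simp
    have hmapT_fst : ((u • ρ).map T).map Prod.fst = ((m : ℝ≥0∞)⁻¹) • Measure.dirac b := by
      rw [Measure.map_map measurable_fst hTm]
      have hconst : (Prod.fst ∘ T) = (fun _ : Euc d × Euc d => b) := rfl
      rw [hconst, Measure.map_const, Measure.smul_apply, hρuniv, smul_eq_mul, hut]
    have hfst : π'.map Prod.fst + (m : ℝ≥0∞)⁻¹ • Measure.dirac a
        = empir m x + (m : ℝ≥0∞)⁻¹ • Measure.dirac b := by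
      rw [hπ'def, Measure.map_add _ _ measurable_fst, Measure.map_add _ _ measurable_fst,
        Measure.map_smul, hρfst, hmapT_fst]
      have h1 : (1 - u) • (t • Measure.dirac a) + (m : ℝ≥0∞)⁻¹ • Measure.dirac a
          = t • Measure.dirac a := by
        rw [smul_smul, ← hut, ← add_smul, ← add_mul, tsub_add_cancel_of_le hu1, one_mul]
      have h2 : σ.map Prod.fst + t • Measure.dirac a = empir m x := by
        rw [← hρfst, ← Measure.map_add _ _ measurable_fst, hσρ, hπ1]
      calc σ.map Prod.fst + (1 - u) • (t • Measure.dirac a) + (m : ℝ≥0∞)⁻¹ • Measure.dirac b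
            + (m : ℝ≥0∞)⁻¹ • Measure.dirac a
          = σ.map Prod.fst + ((1 - u) • (t • Measure.dirac a) + (m : ℝ≥0∞)⁻¹ • Measure.dirac a)
            + (m : ℝ≥0∞)⁻¹ • Measure.dirac b := by abel
        _ = σ.map Prod.fst + t • Measure.dirac a + (m : ℝ≥0∞)⁻¹ • Measure.dirac b := by rw [h1]
        _ = empir m x + (m : ℝ≥0∞)⁻¹ • Measure.dirac b := by rw [h2]
    have hstar : empir m x + (m : ℝ≥0∞)⁻¹ • Measure.dirac b
        = empir m x' + (m : ℝ≥0∞)⁻¹ • Measure.dirac a := by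
      unfold empir
      rw [← smul_add, ← smul_add]
      congr 1
      rw [← Finset.add_sum_erase Finset.univ (fun i => Measure.dirac (x i)) (Finset.mem_univ i₀),
        ← Finset.add_sum_erase Finset.univ (fun i => Measure.dirac (x' i)) (Finset.mem_univ i₀)]
      have hsum : ∑ i ∈ Finset.univ.erase i₀, Measure.dirac (x i)
          = ∑ i ∈ Finset.univ.erase i₀, Measure.dirac (x' i) :=
        Finset.sum_congr rfl fun i hi => by rw [hxx i (Finset.ne_of_mem_erase hi)]
      rw [hsum]
      abel
    have hπ'fst : π'.map Prod.fst = empir m x' := by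
      have hcomb := hfst.trans hstar
      ext E hE
      have h := congrArg (fun μ : Measure (Euc d) => μ E) hcomb
      simp only [Measure.add_apply] at h
      have hfin : ((m : ℝ≥0∞)⁻¹ • Measure.dirac a) E ≠ ∞ := by
        rw [Measure.smul_apply, smul_eq_mul]
        exact ENNReal.mul_ne_top (ENNReal.inv_ne_top.mpr hm0) (measure_ne_top _ _)
      rw [add_comm (Measure.map Prod.fst π' E), add_comm ((empir m x') E)] at h
      exact (ENNReal.add_right_inj hfin).mp h
    have hπ'snd : π'.map Prod.snd = empir n y := by
      rw [hπ'def, Measure.map_add _ _ measurable_snd, Measure.map_add _ _ measurable_snd,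
        Measure.map_smul, Measure.map_map measurable_snd hTm]
      have hsndT : (Prod.snd ∘ T) = (Prod.snd : Euc d × Euc d → Euc d) := rfl
      rw [hsndT, Measure.map_smul, add_assoc, ← add_smul, tsub_add_cancel_of_le hu1, one_smul,
        ← Measure.map_add _ _ measurable_snd, hσρ, hπ2]
    -- integrability and cost
    have hae1 : ∀ᵐ z ∂π, z.1 ∈ Set.range x := by
      rw [ae_iff]
      have hE : MeasurableSet (Set.range x) := (Set.finite_range x).measurableSet
      have hset : {z : Euc d × Euc d | ¬ z.1 ∈ Set.range x} = Prod.fst ⁻¹' (Set.range x)ᶜ := rfl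
      rw [hset, ← Measure.map_apply measurable_fst hE.compl, hπ1]
      exact empir_null m x hE.compl fun i hi => hi (Set.mem_range_self i)
    have hae2 : ∀ᵐ z ∂π, z.2 ∈ Set.range y := by
      rw [ae_iff]
      have hE : MeasurableSet (Set.range y) := (Set.finite_range y).measurableSet
      have hset : {z : Euc d × Euc d | ¬ z.2 ∈ Set.range y} = Prod.snd ⁻¹' (Set.range y)ᶜ := rfl
      rw [hset, ← Measure.map_apply measurable_snd hE.compl, hπ2]
      exact empir_null n y hE.compl fun j hj => hj (Set.mem_range_self j)
    have haeC : ∀ᵐ z ∂π, ‖c z‖ ≤ C := by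
      filter_upwards [hae1, hae2] with z h1 h2
      obtain ⟨i, hi⟩ := h1
      obtain ⟨j, hj⟩ := h2
      rw [Real.norm_eq_abs, abs_of_nonneg (sq_nonneg _), hc]
      simp only
      rw [← hi, ← hj]
      exact hb i j
    have hint : Integrable c π :=
      Integrable.mono' (integrable_const C) cmeas.aestronglyMeasurable haeC
    have hintρ : Integrable c ρ := hint.restrict
    have hintσ : Integrable c σ := hint.restrict
    have hintT : Integrable (fun z => c (T z)) ρ := by
      apply Integrable.mono' (integrable_const C) (cmeas.comp hTm).aestronglyMeasurable
      filter_upwards [ae_restrict_of_ae hae2] with z h2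
      obtain ⟨j, hj⟩ := h2
      rw [Real.norm_eq_abs, abs_of_nonneg (sq_nonneg _)]
      show dist b z.2 ^ 2 ≤ C
      rw [← hj]
      exact hb' j
    have haeTC : ∀ᵐ z ∂ρ, c (T z) ≤ C := by
      filter_upwards [ae_restrict_of_ae hae2] with z h2
      obtain ⟨j, hj⟩ := h2
      show dist b z.2 ^ 2 ≤ C
      rw [← hj]
      exact hb' j
    have hutop : u ≠ ∞ := ENNReal.inv_ne_top.mpr (mul_ne_zero hm0 ht0)
    have h1utop : (1 : ℝ≥0∞) - u ≠ ∞ := (lt_of_le_of_lt tsub_le_self ENNReal.one_lt_top).ne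
    have hint1 : Integrable c ((1 - u) • ρ) := hintρ.smul_measure h1utop
    have hintmap : Integrable c ((u • ρ).map T) := by
      rw [integrable_map_measure cmeas.aestronglyMeasurable hTm.aemeasurable]
      exact hintT.smul_measure hutop
    have hI' : ∫ z, c z ∂π' = ∫ z, c z ∂σ + (1 - u).toReal * ∫ z, c z ∂ρ
        + u.toReal * ∫ z, c (T z) ∂ρ := by
      rw [hπ'def, integral_add_measure (hintσ.add_measure hint1) hintmap,
        integral_add_measure hintσ hint1, integral_smul_measure,
        integral_map hTm.aemeasurable cmeas.aestronglyMeasurable, integral_smul_measure,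
        smul_eq_mul, smul_eq_mul]
    have hI : ∫ z, c z ∂π = ∫ z, c z ∂σ + ∫ z, c z ∂ρ := by
      conv_lhs => rw [← hσρ]
      rw [integral_add_measure hintσ hintρ]
    have hJ : ∫ z, c (T z) ∂ρ ≤ C * t.toReal := by
      calc ∫ z, c (T z) ∂ρ ≤ ∫ _z, C ∂ρ := integral_mono_ae hintT (integrable_const C) haeTC
        _ = C * t.toReal := by rw [integral_const, measureReal_def, hρuniv, smul_eq_mul, mul_comm]
    have hIρnn : 0 ≤ ∫ z, c z ∂ρ := integral_nonneg fun z => sq_nonneg _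
    have hut' : u.toReal * t.toReal = (m : ℝ)⁻¹ := by
      rw [← ENNReal.toReal_mul, hut, ENNReal.toReal_inv, ENNReal.toReal_natCast]
    have h1u : (1 - u).toReal = 1 - u.toReal := by
      rw [ENNReal.toReal_sub_of_le hu1 ENNReal.one_ne_top, ENNReal.toReal_one]
    have hu1r : u.toReal ≤ 1 := by
      have := ENNReal.toReal_mono ENNReal.one_ne_top hu1
      simpa using this
    have hunn : 0 ≤ u.toReal := ENNReal.toReal_nonneg
    have htnn : 0 ≤ t.toReal := ENNReal.toReal_nonneg
    refine ⟨∫ z, c z ∂π', ⟨π', hπ'fst, hπ'snd, rfl⟩, ?_⟩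
    rw [hI', hI, h1u]
    have hCt : u.toReal * (∫ z, c (T z) ∂ρ) ≤ u.toReal * (C * t.toReal) :=
      mul_le_mul_of_nonneg_left hJ hunn
    have heq : u.toReal * (C * t.toReal) = C / m := by
      rw [show u.toReal * (C * t.toReal) = C * (u.toReal * t.toReal) by ring, hut',
        div_eq_mul_inv]
    have huI : 0 ≤ u.toReal * ∫ z, c z ∂ρ := mul_nonneg hunn hIρnn
    nlinarith [hCt, heq, huI]
  -- conclude
  rw [hW, hW']
  have hlb : ∀ r ∈ SS, sInf SS' - C / m ≤ r := by
    intro r hr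
    obtain ⟨r', hr', hle⟩ := hstep r hr
    have := csInf_le hbdd' hr'
    linarith
  have := le_csInf hne hlb
  linarith

lemma W2sq_comm {d : ℕ} (μ ν : Measure (Euc d)) : W2sq μ ν = W2sq ν μ := by
  have hsub : ∀ (μ' ν' : Measure (Euc d)),
      {r : ℝ | ∃ π : Measure (Euc d × Euc d), π.map Prod.fst = μ' ∧ π.map Prod.snd = ν'
        ∧ r = ∫ z, dist z.1 z.2 ^ 2 ∂π} ⊆
      {r : ℝ | ∃ π : Measure (Euc d × Euc d), π.map Prod.fst = ν' ∧ π.map Prod.snd = μ'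
        ∧ r = ∫ z, dist z.1 z.2 ^ 2 ∂π} := by
    rintro μ' ν' r ⟨π, h1, h2, rfl⟩
    refine ⟨π.map Prod.swap, ?_, ?_, ?_⟩
    · rw [Measure.map_map measurable_fst measurable_swap]
      exact h2
    · rw [Measure.map_map measurable_snd measurable_swap]
      exact h1
    · rw [integral_map measurable_swap.aemeasurable cmeas.aestronglyMeasurable]
      simp only [Prod.fst_swap, Prod.snd_swap]
      simp_rw [dist_comm]
  unfold W2sq Wcost
  exact congrArg sInf (Set.Subset.antisymm (hsub μ ν) (hsub ν μ))

/-- (Bounded difference property of `ÎTD²`.) If all sample points of client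
`k` lie in the support sets `S k` (for the `x`-samples) and `T k` (for the `y`-samples), with
`‖z‖² ≤ D_x` on each `S k` and `‖z‖² ≤ D_y` on each `T k`, then replacing a single `x`-sample
point by another point of the support changes `ÎTD²` by at most `2(D_x + D_y)/(K m)`, and
replacing a single `y`-sample point changes it by at most `2(D_x + D_y)/(K n)`. -/
theorem itd2_bounded_difference {d : ℕ} (K m n : ℕ) (hK : 0 < K) (hm : 0 < m) (hn : 0 < n)
    (S T : Fin K → Set (Euc d)) (Dx Dy : ℝ)
    (hDx : ∀ k, ∀ z ∈ S k, ‖z‖ ^ 2 ≤ Dx) (hDy : ∀ k, ∀ z ∈ T k, ‖z‖ ^ 2 ≤ Dy)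
    (x : Fin K → Fin m → Euc d) (y : Fin K → Fin n → Euc d)
    (hx : ∀ k i, x k i ∈ S k) (hy : ∀ k j, y k j ∈ T k) :
    (∀ (x' : Fin K → Fin m → Euc d) (k₀ : Fin K) (i₀ : Fin m),
      (∀ k i, ¬(k = k₀ ∧ i = i₀) → x' k i = x k i) → (∀ k i, x' k i ∈ S k) →
      |ITD2 K m n x y - ITD2 K m n x' y| ≤ 2 * (Dx + Dy) / (K * m)) ∧
    (∀ (y' : Fin K → Fin n → Euc d) (k₀ : Fin K) (j₀ : Fin n),
      (∀ k j, ¬(k = k₀ ∧ j = j₀) → y' k j = y k j) → (∀ k j, y' k j ∈ T k) →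
      |ITD2 K m n x y - ITD2 K m n x y'| ≤ 2 * (Dx + Dy) / (K * n)) := by
  have hcost : ∀ k (z1 z2 : Euc d), z1 ∈ S k → z2 ∈ T k →
      dist z1 z2 ^ 2 ≤ 2 * (Dx + Dy) := by
    intro k z1 z2 h1 h2
    have hx2 := hDx k z1 h1
    have hy2 := hDy k z2 h2
    have hd : dist z1 z2 ≤ ‖z1‖ + ‖z2‖ := dist_le_norm_add_norm z1 z2
    nlinarith [sq_nonneg (‖z1‖ - ‖z2‖), pow_le_pow_left₀ dist_nonneg hd 2]
  have hKr : (0:ℝ) < K := by exact_mod_cast hK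
  constructor
  · intro x' k₀ i₀ hx'eq hx'mem
    have hsame : ∀ k, k ≠ k₀ →
        W2sq (empir m (x k)) (empir n (y k)) = W2sq (empir m (x' k)) (empir n (y k)) := by
      intro k hk
      have : x' k = x k := funext fun i => hx'eq k i (fun h => hk h.1)
      rw [this]
    have hsum : ITD2 K m n x y - ITD2 K m n x' y
        = (1 / (K : ℝ)) * (W2sq (empir m (x k₀)) (empir n (y k₀))
          - W2sq (empir m (x' k₀)) (empir n (y k₀))) := by
      unfold ITD2
      rw [← mul_sub, ← Finset.sum_sub_distrib]
      congr 1
      rw [Finset.sum_eq_single k₀ (fun k _ hk => by rw [hsame k hk]; ring)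
        (fun h => absurd (Finset.mem_univ _) h)]
    have h1 : W2sq (empir m (x' k₀)) (empir n (y k₀))
        ≤ W2sq (empir m (x k₀)) (empir n (y k₀)) + 2 * (Dx + Dy) / m :=
      key m n hm hn (x k₀) (x' k₀) (y k₀) i₀
        (fun i hi => hx'eq k₀ i (fun h => hi h.2))
        _ (fun i j => hcost k₀ _ _ (hx k₀ i) (hy k₀ j))
        (fun j => hcost k₀ _ _ (hx'mem k₀ i₀) (hy k₀ j))
    have h2 : W2sq (empir m (x k₀)) (empir n (y k₀))
        ≤ W2sq (empir m (x' k₀)) (empir n (y k₀)) + 2 * (Dx + Dy) / m :=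
      key m n hm hn (x' k₀) (x k₀) (y k₀) i₀
        (fun i hi => (hx'eq k₀ i (fun h => hi h.2)).symm)
        _ (fun i j => hcost k₀ _ _ (hx'mem k₀ i) (hy k₀ j))
        (fun j => hcost k₀ _ _ (hx k₀ i₀) (hy k₀ j))
    rw [hsum, abs_mul, abs_of_nonneg (by positivity : (0:ℝ) ≤ 1 / (K:ℝ))]
    have habs : |W2sq (empir m (x k₀)) (empir n (y k₀))
        - W2sq (empir m (x' k₀)) (empir n (y k₀))| ≤ 2 * (Dx + Dy) / m :=
      abs_le.mpr ⟨by linarith, by linarith⟩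
    calc (1 / (K:ℝ)) * |W2sq (empir m (x k₀)) (empir n (y k₀))
          - W2sq (empir m (x' k₀)) (empir n (y k₀))|
        ≤ (1 / (K:ℝ)) * (2 * (Dx + Dy) / m) := by
          apply mul_le_mul_of_nonneg_left habs (by positivity)
      _ = 2 * (Dx + Dy) / (K * m) := by
          field_simp
  · intro y' k₀ j₀ hy'eq hy'mem
    have hsame : ∀ k, k ≠ k₀ →
        W2sq (empir m (x k)) (empir n (y k)) = W2sq (empir m (x k)) (empir n (y' k)) := by
      intro k hk
      have : y' k = y k := funext fun j => hy'eq k j (fun h => hk h.1)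
      rw [this]
    have hsum : ITD2 K m n x y - ITD2 K m n x y'
        = (1 / (K : ℝ)) * (W2sq (empir m (x k₀)) (empir n (y k₀))
          - W2sq (empir m (x k₀)) (empir n (y' k₀))) := by
      unfold ITD2
      rw [← mul_sub, ← Finset.sum_sub_distrib]
      congr 1
      rw [Finset.sum_eq_single k₀ (fun k _ hk => by rw [hsame k hk]; ring)
        (fun h => absurd (Finset.mem_univ _) h)]
    have h1 : W2sq (empir n (y' k₀)) (empir m (x k₀))
        ≤ W2sq (empir n (y k₀)) (empir m (x k₀)) + 2 * (Dx + Dy) / n :=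
      key n m hn hm (y k₀) (y' k₀) (x k₀) j₀
        (fun j hj => hy'eq k₀ j (fun h => hj h.2))
        _ (fun j i => by rw [dist_comm]; exact hcost k₀ _ _ (hx k₀ i) (hy k₀ j))
        (fun i => by rw [dist_comm]; exact hcost k₀ _ _ (hx k₀ i) (hy'mem k₀ j₀))
    have h2 : W2sq (empir n (y k₀)) (empir m (x k₀))
        ≤ W2sq (empir n (y' k₀)) (empir m (x k₀)) + 2 * (Dx + Dy) / n :=
      key n m hn hm (y' k₀) (y k₀) (x k₀) j₀
        (fun j hj => (hy'eq k₀ j (fun h => hj h.2)).symm)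
        _ (fun j i => by rw [dist_comm]; exact hcost k₀ _ _ (hx k₀ i) (hy'mem k₀ j))
        (fun i => by rw [dist_comm]; exact hcost k₀ _ _ (hx k₀ i) (hy k₀ j₀))
    rw [hsum, abs_mul, abs_of_nonneg (by positivity : (0:ℝ) ≤ 1 / (K:ℝ))]
    rw [W2sq_comm (empir m (x k₀)) (empir n (y k₀)),
      W2sq_comm (empir m (x k₀)) (empir n (y' k₀))]
    have habs : |W2sq (empir n (y k₀)) (empir m (x k₀))
        - W2sq (empir n (y' k₀)) (empir m (x k₀))| ≤ 2 * (Dx + Dy) / n :=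
      abs_le.mpr ⟨by linarith, by linarith⟩
    calc (1 / (K:ℝ)) * |W2sq (empir n (y k₀)) (empir m (x k₀))
          - W2sq (empir n (y' k₀)) (empir m (x k₀))|
        ≤ (1 / (K:ℝ)) * (2 * (Dx + Dy) / n) := by
          apply mul_le_mul_of_nonneg_left habs (by positivity)
      _ = 2 * (Dx + Dy) / (K * n) := by
          field_simp
end
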